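/- For all n ≥ 0, the p-singular word z_n is not a factor of z_{n+1}. -/

import Mathlib

/-- The `m`-bonacci morphism `φ_m` on letters:
`φ_m(k) = 0·(k+1)` for `0 ≤ k ≤ m-2`, and `φ_m(m-1) = 0`. -/
def phiL (m a : ℕ) : List ℕ := if a = m - 1 then [0] else [0, a + 1]

/-- The `m`-bonacci morphism applied to a finite word. -/
def phiW (m : ℕ) (u : List ℕ) : List ℕ := u.flatMap (phiL m)

/-- The iterates `h n = φ_mⁿ(0)`. -/
def hword (m : ℕ) : ℕ → List ℕ
  | 0 => [0]
  | n + 1 => phiW m (hword m n)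

/-- The `m`-bonacci word, the infinite fixed point of `φ_m` beginning with `0`
(its `i`-th letter is the `i`-th letter of any sufficiently long iterate `φ_mⁿ(0)`). -/
def mbon (m : ℕ) : ℕ → ℕ := fun i => (hword m (i + 1)).getD i 0

/-- Auxiliary course-of-values construction for the p-singular words:
`zsAux m (k+1) i` gives the correct value of the (index-shifted) p-singular word
`z_{i-1}` for every `i ≤ k`. -/
def zsAux (m : ℕ) : ℕ → ℕ → List ℕ
  | 0, _ => []
  | k + 1, i =>
    if i < k then zsAux m k i
    else if i = 0 then []
    else if i = 1 then [0]
    else if i ≤ m then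
      -- here `i = n+1` with `1 ≤ n ≤ m-1`:
      -- `z_n = z_{n-2} z_{n-3} ⋯ z_1 z_0 · n · z_0 z_1 ⋯ z_{n-3} z_{n-2}`
      (((List.range (i - 2)).map (fun j => zsAux m k (i - 2 - j))).flatten)
        ++ [i - 1]
        ++ (((List.range (i - 2)).map (fun j => zsAux m k (1 + j))).flatten)
    else
      -- here `i = n+1` with `n ≥ m`:
      -- `z_n = z_{n-2} ⋯ z_{n-(m-1)} · z_{n-m} · z_{n-(m+1)} · z_{n-m} · z_{n-(m-1)} ⋯ z_{n-2}`
      (((List.range (m - 2)).map (fun j => zsAux m k (i - 2 - j))).flatten)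
        ++ zsAux m k (i - m) ++ zsAux m k (i - m - 1) ++ zsAux m k (i - m)
        ++ (((List.range (m - 2)).map (fun j => zsAux m k (i - m + 1 + j))).flatten)

/-- The (index-shifted) p-singular words for the `m`-bonacci word:
`zsw m 0 = z₋₁ = ε`, and `zsw m (n+1) = zₙ` for `n ≥ 0`, where
`z₀ = 0`, `zₙ = z_{n-2} z_{n-3} ⋯ z_1 z_0 · n · z_0 z_1 ⋯ z_{n-3} z_{n-2}` for `1 ≤ n ≤ m-1`
(`n` denoting the single letter `n`), and
`zₙ = z_{n-2} z_{n-3} ⋯ z_{n-(m-1)} z_{n-m} z_{n-(m+1)} z_{n-m} z_{n-(m-1)} ⋯ z_{n-3} z_{n-2}`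
for `n ≥ m`. -/
def zsw (m k : ℕ) : List ℕ := zsAux m (k + 1) k

-- chunk 1: stabilization and recurrences
lemma zsAux_stable (m K i : ℕ) (h : i < K) : zsAux m K i = zsw m i := by
  induction K with
  | zero => omega
  | succ K ih =>
    rcases Nat.lt_or_ge i K with h' | h'
    · rw [show zsAux m (K+1) i = zsAux m K i from by rw [zsAux]; simp [h'], ih h']
    · have : i = K := by omega
      subst this
      rfl

/-- descending product `Z a, Z (a-1), …, Z (a-c+1)` -/
def dsc (m c a : ℕ) : List ℕ := ((List.range c).map (fun j => zsw m (a - j))).flatten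

/-- ascending product `Z b, Z (b+1), …, Z (b+c-1)` -/
def acs (m c b : ℕ) : List ℕ := ((List.range c).map (fun j => zsw m (b + j))).flatten

lemma zsw_zero (m : ℕ) : zsw m 0 = [] := rfl

lemma zsw_one (m : ℕ) : zsw m 1 = [0] := rfl

lemma zsw_mid (m i : ℕ) (h2 : 2 ≤ i) (him : i ≤ m) :
    zsw m i = dsc m (i-2) (i-2) ++ [i-1] ++ acs m (i-2) 1 := by
  rw [zsw, zsAux]
  rw [if_neg (by omega), if_neg (by omega), if_neg (by omega), if_pos him]
  have h1 : List.map (fun j => zsAux m i (i-2-j)) (List.range (i-2))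
      = List.map (fun j => zsw m ((i-2) - j)) (List.range (i-2)) := by
    apply List.map_congr_left
    intro j hj
    rw [List.mem_range] at hj
    exact zsAux_stable m i (i - 2 - j) (by omega)
  have h2' : List.map (fun j => zsAux m i (1+j)) (List.range (i-2))
      = List.map (fun j => zsw m (1 + j)) (List.range (i-2)) := by
    apply List.map_congr_left
    intro j hj
    rw [List.mem_range] at hj
    exact zsAux_stable m i (1 + j) (by omega)
  rw [h1, h2']
  rfl

lemma zsw_big (m i : ℕ) (hm : 2 ≤ m) (him : m < i) :
    zsw m i = dsc m (m-2) (i-2) ++ zsw m (i-m) ++ zsw m (i-m-1) ++ zsw m (i-m)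
      ++ acs m (m-2) (i-m+1) := by
  rw [zsw, zsAux]
  rw [if_neg (by omega), if_neg (by omega), if_neg (by omega), if_neg (by omega)]
  have h1 : List.map (fun j => zsAux m i (i-2-j)) (List.range (m-2))
      = List.map (fun j => zsw m ((i-2) - j)) (List.range (m-2)) := by
    apply List.map_congr_left
    intro j hj
    rw [List.mem_range] at hj
    exact zsAux_stable m i (i - 2 - j) (by omega)
  have h2' : List.map (fun j => zsAux m i (i-m+1+j)) (List.range (m-2))
      = List.map (fun j => zsw m ((i-m+1) + j)) (List.range (m-2)) := by
    apply List.map_congr_left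
    intro j hj
    rw [List.mem_range] at hj
    exact zsAux_stable m i (i - m + 1 + j) (by omega)
  rw [h1, h2', zsAux_stable m i (i-m) (by omega), zsAux_stable m i (i-m-1) (by omega)]
  rfl
-- chunk 2: peel lemmas, phiW, pad, telescoping
lemma dsc_zero (m a : ℕ) : dsc m 0 a = [] := rfl

lemma acs_zero (m b : ℕ) : acs m 0 b = [] := rfl

lemma dsc_peel_first (m c a : ℕ) : dsc m (c+1) a = zsw m a ++ dsc m c (a-1) := by
  unfold dsc
  rw [List.range_succ_eq_map, List.map_cons, List.flatten_cons, List.map_map]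
  have h : ((fun j => zsw m (a - j)) ∘ Nat.succ) = fun j => zsw m (a - 1 - j) := by
    funext j
    simp only [Function.comp_apply]
    congr 1
    omega
  rw [h]
  simp

lemma dsc_peel_last (m c a : ℕ) : dsc m (c+1) a = dsc m c a ++ zsw m (a - c) := by
  unfold dsc
  rw [List.range_succ, List.map_append, List.flatten_append]
  simp

lemma acs_peel_first (m c b : ℕ) : acs m (c+1) b = zsw m b ++ acs m c (b+1) := by
  unfold acs
  rw [List.range_succ_eq_map, List.map_cons, List.flatten_cons, List.map_map]
  have h : ((fun j => zsw m (b + j)) ∘ Nat.succ) = fun j => zsw m (b + 1 + j) := by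
    funext j
    simp only [Function.comp_apply]
    congr 1
    omega
  rw [h]
  simp

lemma acs_peel_last (m c b : ℕ) : acs m (c+1) b = acs m c b ++ zsw m (b + c) := by
  unfold acs
  rw [List.range_succ, List.map_append, List.flatten_append]
  simp

lemma phiW_nil (m : ℕ) : phiW m [] = [] := rfl

lemma phiW_append (m : ℕ) (u v : List ℕ) : phiW m (u ++ v) = phiW m u ++ phiW m v := by
  unfold phiW
  exact List.flatMap_append

lemma phiW_cons (m a : ℕ) (u : List ℕ) : phiW m (a :: u) = phiL m a ++ phiW m u := rfl

lemma phiL_last (m : ℕ) : phiL m (m-1) = [0] := by simp [phiL]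

lemma phiL_not_last (m a : ℕ) (h : a ≠ m - 1) : phiL m a = [0, a+1] := by simp [phiL, h]

/-- parity padding: `[0]` for odd, `[]` for even. -/
def pad (b : ℕ) : List ℕ := if b % 2 = 1 then [0] else []

lemma pad_congr (a b : ℕ) (h : a % 2 = b % 2) : pad a = pad b := by simp [pad, h]

lemma pad_even (b : ℕ) (h : b % 2 = 0) : pad b = [] := by simp [pad, h]

lemma pad_odd (b : ℕ) (h : b % 2 = 1) : pad b = [0] := by
  simp [pad, h]

/-- Telescoping for descending products, assuming the base relation below index `a`. -/
lemma Tdsc (m : ℕ) (c a : ℕ) (hca : c ≤ a)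
    (ih : ∀ i, i ≤ a → phiW m (zsw m i) ++ pad (i+1) = pad i ++ zsw m (i+1)) :
    phiW m (dsc m c a) ++ pad (a + c) = pad a ++ dsc m c (a+1) := by
  induction c generalizing a with
  | zero => simp [dsc_zero, phiW_nil]
  | succ c ihc =>
    rw [dsc_peel_first, phiW_append, dsc_peel_first m c (a+1)]
    have e1 : pad (a + (c+1)) = pad ((a-1) + c) := pad_congr _ _ (by omega)
    rw [List.append_assoc, e1,
      ihc (a-1) (by omega) (fun i hi => ih i (by omega))]
    have e2 : a - 1 + 1 = a := by omega
    rw [e2]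
    have e3 : pad (a - 1) = pad (a + 1) := pad_congr _ _ (by omega)
    rw [← List.append_assoc, e3, ih a le_rfl]
    simp [List.append_assoc]

/-- Telescoping for ascending products, assuming the base relation below index `b + c`. -/
lemma Tacs (m : ℕ) (c b : ℕ)
    (ih : ∀ i, i < b + c → phiW m (zsw m i) ++ pad (i+1) = pad i ++ zsw m (i+1)) :
    phiW m (acs m c b) ++ pad (b + c) = pad b ++ acs m c (b+1) := by
  induction c with
  | zero => simp [acs_zero, phiW_nil]
  | succ c ihc =>
    rw [acs_peel_last, phiW_append, acs_peel_last m c (b+1)]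
    have e1 : pad (b + (c+1)) = pad (b + c + 1) := pad_congr _ _ (by omega)
    rw [List.append_assoc, e1, ih (b+c) (by omega), ← List.append_assoc,
      ihc (fun i hi => ih i (by omega))]
    have e2 : b + 1 + c = b + c + 1 := by omega
    simp [List.append_assoc, e2]
-- chunk 3: the base relation
lemma step_assoc {α : Type*} (x p q y : List α) (h : x ++ p = q ++ y) (t : List α) :
    x ++ (p ++ t) = q ++ (y ++ t) := by
  rw [← List.append_assoc, h, List.append_assoc]

theorem BR (m : ℕ) (hm : 2 ≤ m) :
    ∀ j, phiW m (zsw m j) ++ pad (j+1) = pad j ++ zsw m (j+1) := by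
  intro j
  induction j using Nat.strong_induction_on with
  | _ j ih =>
  rcases Nat.lt_or_ge j 2 with hj2 | hj2
  · -- j = 0 or j = 1
    interval_cases j
    · simp [zsw_zero, zsw_one, phiW_nil, pad]
    · rw [zsw_one, zsw_mid m 2 le_rfl hm]
      simp only [show (2:ℕ)-2 = 0 from rfl, dsc_zero, acs_zero]
      rw [phiW_cons, phiW_nil, phiL_not_last m 0 (by omega)]
      simp [pad]
  rcases Nat.lt_or_ge j m with hjm | hjm
  · -- 2 ≤ j < m
    rw [zsw_mid m j (by omega) (by omega), zsw_mid m (j+1) (by omega) (by omega)]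
    have hd : phiW m (dsc m (j-2) (j-2)) = pad j ++ dsc m (j-2) (j-1) := by
      have h := Tdsc m (j-2) (j-2) le_rfl (fun i hi => ih i (by omega))
      rw [pad_even (j-2+(j-2)) (by omega), List.append_nil,
        show j-2+1 = j-1 from by omega, pad_congr (j-2) j (by omega)] at h
      exact h
    have ha : phiW m (acs m (j-2) 1) ++ pad (j+1) = [0] ++ acs m (j-2) 2 := by
      have h := Tacs m (j-2) 1 (fun i hi => ih i (by omega))
      rw [show (1:ℕ)+(j-2) = j-1 from by omega, pad_congr (j-1) (j+1) (by omega),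
        pad_odd 1 rfl] at h
      exact h
    have hmid : phiW m [j-1] = [0] ++ ([j] ++ []) := by
      rw [phiW_cons, phiW_nil, phiL_not_last m (j-1) (by omega),
        show j-1+1 = j from by omega]
      rfl
    -- expand RHS pieces
    rw [show (j+1)-2 = j-1 from by omega, show (j+1)-1 = j from by omega,
      show j-1 = (j-2)+1 from by omega, dsc_peel_last, acs_peel_first,
      show (j-2)+1 = j-1 from by omega, show j-1-(j-2) = 1 from by omega,
      zsw_one]
    rw [phiW_append, phiW_append, hmid, hd]
    simp only [List.append_assoc]
    rw [ha]
    simp [List.append_assoc]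
  rcases Nat.lt_or_ge m j with hjm' | hjm'
  swap
  · -- j = m
    have hjm'' : j = m := by omega
    rw [zsw_mid m j (by omega) (by omega), zsw_big m (j+1) hm (by omega)]
    have hd : phiW m (dsc m (j-2) (j-2)) = pad j ++ dsc m (j-2) (j-1) := by
      have h := Tdsc m (j-2) (j-2) le_rfl (fun i hi => ih i (by omega))
      rw [pad_even (j-2+(j-2)) (by omega), List.append_nil,
        show j-2+1 = j-1 from by omega, pad_congr (j-2) j (by omega)] at h
      exact h
    have ha : phiW m (acs m (j-2) 1) ++ pad (j+1) = [0] ++ acs m (j-2) 2 := by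
      have h := Tacs m (j-2) 1 (fun i hi => ih i (by omega))
      rw [show (1:ℕ)+(j-2) = j-1 from by omega, pad_congr (j-1) (j+1) (by omega),
        pad_odd 1 rfl] at h
      exact h
    have hmid : phiW m [j-1] = [0] := by
      rw [phiW_cons, phiW_nil, show j-1 = m-1 from by omega, phiL_last]
      rfl
    rw [show (j+1)-2 = j-1 from by omega, show j+1-m = 1 from by omega,
      show (1:ℕ)-1 = 0 from rfl, show (1:ℕ)+1 = 2 from rfl, zsw_one, zsw_zero]
    rw [phiW_append, phiW_append, hmid, hd]
    simp only [List.append_assoc]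
    rw [ha]
    simp only [List.append_assoc, List.nil_append, List.cons_append, List.append_nil]
    rw [hjm'']
  · -- j > m
    rw [zsw_big m j hm hjm', zsw_big m (j+1) hm (by omega)]
    have hd : phiW m (dsc m (m-2) (j-2)) ++ pad (j-m) = pad j ++ dsc m (m-2) (j-1) := by
      have h := Tdsc m (m-2) (j-2) (by omega) (fun i hi => ih i (by omega))
      rw [show j-2+1 = j-1 from by omega, pad_congr (j-2+(m-2)) (j-m) (by omega),
        pad_congr (j-2) j (by omega)] at h
      exact h
    have ha : phiW m (acs m (m-2) (j-m+1)) ++ pad (j+1) =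
        pad (j-m+1) ++ acs m (m-2) (j-m+2) := by
      have h := Tacs m (m-2) (j-m+1) (fun i hi => ih i (by omega))
      rw [show j-m+1+(m-2) = j-1 from by omega, pad_congr (j-1) (j+1) (by omega),
        show j-m+1+1 = j-m+2 from by omega] at h
      exact h
    have h1 := ih (j-m) (by omega)
    rw [show j-m+1 = j-m+1 from rfl] at h1
    have h2 := ih (j-m-1) (by omega)
    rw [show j-m-1+1 = j-m from by omega, pad_congr (j-m-1) (j-m+1) (by omega)] at h2
    rw [show (j+1)-2 = j-1 from by omega, show j+1-m = j-m+1 from by omega,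
      show j-m+1-1 = j-m from by omega, show j-m+1+1 = j-m+2 from by omega]
    rw [phiW_append, phiW_append, phiW_append, phiW_append]
    simp only [List.append_assoc]
    rw [ha]
    rw [step_assoc (phiW m (zsw m (j-m))) (pad (j-m+1)) (pad (j-m)) (zsw m (j-m+1)) h1]
    rw [step_assoc (phiW m (zsw m (j-m-1))) (pad (j-m)) (pad (j-m+1)) (zsw m (j-m)) h2]
    rw [step_assoc (phiW m (zsw m (j-m))) (pad (j-m+1)) (pad (j-m)) (zsw m (j-m+1)) h1]
    rw [step_assoc (phiW m (dsc m (m-2) (j-2))) (pad (j-m)) (pad j) (dsc m (m-2) (j-1)) hd]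
-- chunk 4: structural facts
lemma zsw_ne_nil (m : ℕ) (hm : 2 ≤ m) : ∀ k, 1 ≤ k → zsw m k ≠ [] := by
  intro k
  induction k using Nat.strong_induction_on with
  | _ k ih =>
  intro hk
  rcases Nat.lt_or_ge k 2 with h2 | h2
  · have : k = 1 := by omega
    subst this
    simp [zsw_one]
  rcases le_or_gt k m with hkm | hkm
  · rw [zsw_mid m k h2 hkm]
    simp
  · rw [zsw_big m k hm hkm]
    intro h
    rw [List.append_eq_nil_iff, List.append_eq_nil_iff, List.append_eq_nil_iff,
      List.append_eq_nil_iff] at h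
    exact ih (k-m) (by omega) (by omega) h.1.1.1.2

lemma zsw_head_even (m : ℕ) (hm : 2 ≤ m) :
    ∀ k, 2 ≤ k → k % 2 = 0 → ∃ r, zsw m k = 1 :: r := by
  intro k
  induction k using Nat.strong_induction_on with
  | _ k ih =>
  intro hk2 hke
  rcases Nat.lt_or_ge k 4 with h4 | h4
  · have : k = 2 := by omega
    subst this
    refine ⟨[], ?_⟩
    rw [zsw_mid m 2 le_rfl hm]
    rfl
  have hmain : ∃ r, zsw m (k-2) = 1 :: r := ih (k-2) (by omega) (by omega) (by omega)
  obtain ⟨r, hr⟩ := hmain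
  rcases le_or_gt k m with hkm | hkm
  · rw [zsw_mid m k hk2 hkm, show k-2 = (k-3)+1 from by omega, dsc_peel_first,
      show (k-3)+1 = k-2 from by omega, hr]
    exact ⟨r ++ (dsc m (k-3) (k-2-1) ++ [k-1] ++ acs m (k-2) 1), by
      simp [List.append_assoc]⟩
  rcases Nat.lt_or_ge m 3 with hm2 | hm3
  · -- m = 2
    have hm2' : m = 2 := by omega
    subst hm2'
    rw [zsw_big 2 k (by omega) hkm]
    simp only [show (2:ℕ)-2 = 0 from rfl, dsc_zero, acs_zero, List.nil_append,
      List.append_nil]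
    rw [hr]
    exact ⟨r ++ (zsw 2 (k-2-1) ++ (1::r)), by simp [List.append_assoc]⟩
  · rw [zsw_big m k hm hkm, show m-2 = (m-3)+1 from by omega, dsc_peel_first,
      show (m-3)+1 = m-2 from by omega, hr]
    exact ⟨r ++ (dsc m (m-3) (k-2-1) ++ zsw m (k-m) ++ zsw m (k-m-1) ++ zsw m (k-m)
      ++ acs m (m-2) (k-m+1)), by simp [List.append_assoc]⟩

lemma zsw_last_odd (m : ℕ) (hm : 2 ≤ m) :
    ∀ k, k % 2 = 1 → ∃ r, zsw m k = r ++ [0] := by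
  intro k
  induction k using Nat.strong_induction_on with
  | _ k ih =>
  intro hko
  rcases Nat.lt_or_ge k 3 with h3 | h3
  · have : k = 1 := by omega
    subst this
    exact ⟨[], rfl⟩
  have hmain : ∃ r, zsw m (k-2) = r ++ [0] := ih (k-2) (by omega) (by omega)
  obtain ⟨r, hr⟩ := hmain
  rcases le_or_gt k m with hkm | hkm
  · rw [zsw_mid m k (by omega) hkm, show k-2 = (k-3)+1 from by omega, acs_peel_last,
      show (1:ℕ) + (k-3) = k-2 from by omega, hr]
    exact ⟨dsc m ((k-3)+1) ((k-3)+1) ++ [k-1] ++ (acs m (k-3) 1 ++ r), by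
      simp [List.append_assoc]⟩
  rcases Nat.lt_or_ge m 3 with hm2 | hm3
  · -- m = 2
    have hm2' : m = 2 := by omega
    subst hm2'
    rw [zsw_big 2 k (by omega) hkm]
    simp only [show (2:ℕ)-2 = 0 from rfl, dsc_zero, acs_zero, List.nil_append,
      List.append_nil]
    rw [hr]
    exact ⟨(r ++ [0]) ++ zsw 2 (k-2-1) ++ r, by simp [List.append_assoc]⟩
  · rw [zsw_big m k hm hkm, show m-2 = (m-3)+1 from by omega, acs_peel_last,
      show k-m+1+(m-3) = k-2 from by omega, hr]
    exact ⟨dsc m ((m-3)+1) (k-2) ++ zsw m (k-m) ++ zsw m (k-m-1) ++ zsw m (k-m)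
      ++ (acs m (m-3) (k-m+1) ++ r), by simp [List.append_assoc]⟩
-- chunk 5: desubstitution machinery
lemma phiW_head (m b : ℕ) (u : List ℕ) : ∃ r, phiW m (b :: u) = 0 :: r := by
  rw [phiW_cons]
  by_cases h : b = m - 1
  · subst h
    rw [phiL_last]
    exact ⟨phiW m u, rfl⟩
  · rw [phiL_not_last m b h]
    exact ⟨(b + 1) :: phiW m u, rfl⟩

/-- In an image `phiW m w`, any non-zero letter is immediately preceded by a `0`. -/
lemma pre_zero (m : ℕ) : ∀ (w s t : List ℕ) (x : ℕ), s ++ x :: t = phiW m w → x ≠ 0 →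
    ∃ s', s = s' ++ [0] := by
  intro w
  induction w with
  | nil =>
    intro s t x h hx
    simp [phiW_nil] at h
  | cons a w ihw =>
    intro s t x h hx
    rw [phiW_cons] at h
    by_cases ha : a = m - 1
    · rw [ha, phiL_last] at h
      match s, h with
      | [], h => simp at h; omega
      | c :: s', h =>
        simp only [List.cons_append, List.singleton_append, List.cons.injEq] at h
        obtain ⟨rfl, h2⟩ := h
        obtain ⟨s'', hs''⟩ := ihw s' t x h2 hx
        exact ⟨0 :: s'', by simp [hs'']⟩
    · rw [phiL_not_last m a ha] at h
      rcases s with _ | ⟨c, _ | ⟨d, s'⟩⟩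
      · simp only [List.nil_append, List.cons_append, List.cons.injEq] at h
        omega
      · simp only [List.cons_append, List.nil_append, List.cons.injEq] at h
        exact ⟨[], by simp [h.1]⟩
      · simp only [List.cons_append, List.cons.injEq] at h
        obtain ⟨h1, h2, h3⟩ := h
        obtain ⟨s'', hs''⟩ := ihw s' t x h3 hx
        exact ⟨0 :: d :: s'', by simp [hs'', h1]⟩

/-- End-of-occurrence side condition for desubstitution. -/
def EndOK (m : ℕ) (u t : List ℕ) : Prop :=
  t = [] ∨ (∃ t', t = 0 :: t') ∨ (∃ v x, u = v ++ [x] ∧ x ≠ m - 1)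

lemma endOK_tail (m : ℕ) (b : ℕ) (u t : List ℕ) (hu : u ≠ [])
    (h : EndOK m (b :: u) t) : EndOK m u t := by
  rcases h with h | h | ⟨v, x, hvx, hx⟩
  · exact Or.inl h
  · exact Or.inr (Or.inl h)
  · refine Or.inr (Or.inr ?_)
    match v, hvx with
    | [], hvx =>
      simp only [List.nil_append, List.cons.injEq] at hvx
      exact absurd hvx.2 hu
    | c :: v', hvx =>
      simp only [List.cons_append, List.cons.injEq] at hvx
      exact ⟨v', x, hvx.2, hx⟩

/-- Prefix desubstitution: an aligned image occurrence at the start comes from a prefix. -/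
lemma desub_prefix (m : ℕ) : ∀ (u w t : List ℕ), phiW m u ++ t = phiW m w →
    EndOK m u t → u <+: w := by
  intro u
  induction u with
  | nil => intro w t _ _; exact List.nil_prefix
  | cons b u ihu =>
    intro w t h hend
    match w with
    | [] =>
      exfalso
      rw [phiW_nil] at h
      obtain ⟨r, hr⟩ := phiW_head m b u
      rw [hr] at h
      simp at h
    | a :: w' =>
      rw [phiW_cons, phiW_cons] at h
      by_cases hb : b = m - 1 <;> by_cases ha : a = m - 1
      · -- both the last letter
        have hba : b = a := by rw [hb, ha]
        subst hba
        rw [hb, phiL_last] at h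
        simp only [List.singleton_append, List.cons_append, List.cons.injEq,
          true_and] at h
        rw [List.cons_prefix_cons]
        refine ⟨rfl, ?_⟩
        rcases Decidable.em (u = []) with hu | hu
        · subst hu
          exact List.nil_prefix
        · exact ihu w' t (by simpa using h) (endOK_tail m b u t hu hend)
      · -- b = m-1, a ≠ m-1 : contradiction
        exfalso
        rw [hb, phiL_last, phiL_not_last m a ha] at h
        simp only [List.singleton_append, List.cons_append, List.cons.injEq,
          true_and] at h
        match u with
        | [] =>
          rw [phiW_nil, List.nil_append] at h
          rcases hend with hend | ⟨t', ht'⟩ | ⟨v, x, hvx, hx⟩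
          · rw [hend] at h; simp at h
          · rw [ht'] at h; simp at h
          · match v, hvx with
            | [], hvx =>
              simp only [List.nil_append, List.cons.injEq] at hvx
              exact hx (hvx.1 ▸ hb)
            | c :: v', hvx => simp at hvx
        | b' :: u' =>
          obtain ⟨r, hr⟩ := phiW_head m b' u'
          rw [hr] at h
          simp at h
      · -- b ≠ m-1, a = m-1 : contradiction
        exfalso
        rw [ha, phiL_last, phiL_not_last m b hb] at h
        simp only [List.singleton_append, List.cons_append, List.cons.injEq,
          true_and] at h
        match w' with
        | [] => rw [phiW_nil] at h; simp at h
        | a' :: w'' =>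
          obtain ⟨r, hr⟩ := phiW_head m a' w''
          rw [hr] at h
          simp at h
      · -- both not the last letter
        rw [phiL_not_last m b hb, phiL_not_last m a ha] at h
        simp only [List.cons_append, List.cons.injEq, true_and] at h
        obtain ⟨hba, h2⟩ := h
        have hba' : b = a := by omega
        subst hba'
        rw [List.cons_prefix_cons]
        refine ⟨rfl, ?_⟩
        rcases Decidable.em (u = []) with hu | hu
        · subst hu
          exact List.nil_prefix
        · exact ihu w' t (by simpa using h2) (endOK_tail m b u t hu hend)

/-- Infix desubstitution. -/
lemma desub_infix (m : ℕ) : ∀ (w s u t : List ℕ), s ++ phiW m u ++ t = phiW m w →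
    u ≠ [] → EndOK m u t → u <:+: w := by
  intro w
  induction w with
  | nil =>
    intro s u t h hu _
    rw [phiW_nil] at h
    match u with
    | b :: u' =>
      obtain ⟨r, hr⟩ := phiW_head m b u'
      rw [hr] at h
      simp at h
  | cons a w' ihw =>
    intro s u t h hu hend
    rw [phiW_cons] at h
    match s with
    | [] =>
      rw [List.nil_append] at h
      exact ((desub_prefix m u (a :: w') t (by rw [phiW_cons]; exact h)
        hend)).isInfix
    | c :: s' =>
      by_cases ha : a = m - 1
      · rw [ha, phiL_last] at h
        simp only [List.cons_append, List.singleton_append, List.cons.injEq] at h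
        exact List.infix_cons (ihw s' u t h.2 hu hend)
      · rw [phiL_not_last m a ha] at h
        match s', h with
        | [], h =>
          exfalso
          simp only [List.cons_append, List.nil_append, List.cons.injEq] at h
          match u with
          | b :: u' =>
            obtain ⟨r, hr⟩ := phiW_head m b u'
            rw [hr] at h
            simp at h
        | d :: s'', h =>
          simp only [List.cons_append, List.cons.injEq] at h
          obtain ⟨-, -, h3⟩ := h
          exact List.infix_cons (ihw s'' u t h3 hu hend)
-- chunk 6: main theorem
lemma infix_drop_last (u v : List ℕ) (c : ℕ) (h : u <:+: v ++ [c])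
    (hne : ∃ v0 x, u = v0 ++ [x] ∧ x ≠ c) : u <:+: v := by
  obtain ⟨s, t, hst⟩ := h
  obtain ⟨v0, x, rfl, hx⟩ := hne
  rcases List.eq_nil_or_concat t with rfl | ⟨t', d, rfl⟩
  · exfalso
    rw [List.append_nil] at hst
    have h2 : (s ++ v0) ++ [x] = v ++ [c] := by
      rw [← hst]; simp [List.append_assoc]
    have := (List.append_inj' h2 rfl).2
    simp at this
    exact hx this
  · have h2 : (s ++ (v0 ++ [x]) ++ t') ++ [d] = v ++ [c] := by
      rw [← hst]; simp [List.concat_eq_append, List.append_assoc]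
    have h3 := (List.append_inj' h2 rfl).1
    exact ⟨s, t', h3⟩

lemma BR_even (m : ℕ) (hm : 2 ≤ m) (j : ℕ) (hj : j % 2 = 0) :
    phiW m (zsw m j) ++ [0] = zsw m (j+1) := by
  have h := BR m hm j
  rw [pad_odd (j+1) (by omega), pad_even j hj, List.nil_append] at h
  exact h

lemma BR_odd (m : ℕ) (hm : 2 ≤ m) (j : ℕ) (hj : j % 2 = 1) :
    phiW m (zsw m j) = 0 :: zsw m (j+1) := by
  have h := BR m hm j
  rw [pad_even (j+1) (by omega), pad_odd j hj, List.append_nil] at h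
  exact h

/-- For all `n ≥ 0`, the p-singular word `zₙ` is not a factor of `z_{n+1}`. -/
theorem psingular_not_infix_succ (m : ℕ) (hm : 2 ≤ m) (n : ℕ) :
    ¬ zsw m (n + 1) <:+: zsw m (n + 2) := by
  induction n with
  | zero =>
    intro h
    have h0 : (0:ℕ) ∈ zsw m 2 := h.subset (by simp [zsw_one])
    rw [zsw_mid m 2 le_rfl hm] at h0
    simp [dsc_zero, acs_zero] at h0
  | succ n ihn =>
    intro h
    obtain ⟨s, t, hst⟩ := h
    apply ihn
    rcases Nat.even_or_odd (n+2) with hpar | hpar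
    · -- n+2 even, n+1 odd
      have he : (n+2) % 2 = 0 := Nat.even_iff.mp hpar
      have hE := BR_even m hm (n+2) he
      have hO := BR_odd m hm (n+1) (by omega)
      obtain ⟨r, hr⟩ := zsw_head_even m hm (n+2) (by omega) he
      have himg : zsw m (n+2+1) = phiW m (zsw m (n+2) ++ [m-1]) := by
        rw [phiW_append, phiW_cons, phiW_nil, phiL_last, List.append_nil, hE]
      rw [himg] at hst
      -- find the 0 before the occurrence
      obtain ⟨s0, rfl⟩ := pre_zero m (zsw m (n+2) ++ [m-1]) s (r ++ t) 1
        (by rw [← hst, hr]; simp) (by omega)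
      have hst2 : s0 ++ phiW m (zsw m (n+1)) ++ t = phiW m (zsw m (n+2) ++ [m-1]) := by
        rw [hO, ← hst]
        simp [List.append_assoc]
      obtain ⟨v, hv⟩ := zsw_last_odd m hm (n+1) (by omega)
      have hinf : zsw m (n+1) <:+: zsw m (n+2) ++ [m-1] :=
        desub_infix m (zsw m (n+2) ++ [m-1]) s0 (zsw m (n+1)) t hst2
          (zsw_ne_nil m hm (n+1) (by omega))
          (Or.inr (Or.inr ⟨v, 0, hv, by omega⟩))
      exact infix_drop_last _ _ _ hinf ⟨v, 0, hv, by omega⟩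
    · -- n+2 odd, n+1 even
      have ho : (n+2) % 2 = 1 := Nat.odd_iff.mp hpar
      have hO := BR_odd m hm (n+2) ho
      have hE := BR_even m hm (n+1) (by omega)
      have hst2 : (0 :: s) ++ phiW m (zsw m (n+1)) ++ ([0] ++ t) =
          phiW m (zsw m (n+2)) := by
        rw [hO]
        have : zsw m (n+2) = phiW m (zsw m (n+1)) ++ [0] := hE.symm
        rw [show n+2+1 = n+3 from rfl] at hst
        rw [← hst, this]
        simp [List.append_assoc]
      exact desub_infix m (zsw m (n+2)) (0 :: s) (zsw m (n+1)) ([0] ++ t) hst2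
        (zsw_ne_nil m hm (n+1) (by omega)) (Or.inr (Or.inl ⟨t, rfl⟩))
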